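/- Let k ≥ 1 be an integer and let S be a conical product rule of order k on the reference pyramid (built from two one-dimensional quadratures exact for polynomials of degree ≤ 2k+1 as in the stated hypotheses, with all points ζ_l ∈ [0,1)). Let ũ = (ũ₁,ũ₂,ũ₃) and ṽ = (ṽ₁,ṽ₂,ṽ₃) be elements of the H(curl)-underlying space U^{(1)}_k (triples of functions on K∞), and let A ∈ ℝ^{3×3} be a constant matrix. Define û = (û₁,û₂,û₃) on K̂ ∖ {ζ=1} by (û₁,û₂,û₃)(φ(x,y,z)) = (1+z)·(ũ₁(x,y,z), ũ₂(x,y,z), x·ũ₁(x,y,z) + y·ũ₂(x,y,z) + (1+z)·ũ₃(x,y,z)), and likewise v̂ from ṽ. Then the function F = ∑_{i,j=1}^{3} A_{ij} ûᵢ v̂ⱼ is Lebesgue integrable on K̂ and S(F) = ∫_{K̂} F. -/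

import Mathlib

open MeasureTheory

noncomputable section

/-- The reference pyramid K̂ ⊂ ℝ³ (coordinates (ξ, η, ζ)). -/
def Khat : Set (ℝ × ℝ × ℝ) :=
  {p | 0 ≤ p.2.2 ∧ p.2.2 ≤ 1 ∧ 0 ≤ p.1 ∧ p.1 ≤ 1 - p.2.2 ∧ 0 ≤ p.2.1 ∧ p.2.1 ≤ 1 - p.2.2}

/-- The k-weighted tensor product polynomial space Q_k^{l,m,n}: the span of
(x,y,z) ↦ x^a y^b z^c / (1+z)^k for 0 ≤ a ≤ l, 0 ≤ b ≤ m, 0 ≤ c ≤ n. -/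
def Qspace (k : ℕ) (l m n : ℤ) : Submodule ℝ ((ℝ × ℝ × ℝ) → ℝ) :=
  Submodule.span ℝ {f | ∃ a b c : ℕ, (a : ℤ) ≤ l ∧ (b : ℤ) ≤ m ∧ (c : ℤ) ≤ n ∧
    f = fun p => p.1 ^ a * p.2.1 ^ b * p.2.2 ^ c / (1 + p.2.2) ^ k}

/-- The inverse of the projective map φ: (ξ,η,ζ) ↦ (ξ/(1−ζ), η/(1−ζ), ζ/(1−ζ)). -/
def phiInv (p : ℝ × ℝ × ℝ) : ℝ × ℝ × ℝ :=
  (p.1 / (1 - p.2.2), p.2.1 / (1 - p.2.2), p.2.2 / (1 - p.2.2))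

/-- The conical product quadrature rule on the reference pyramid. -/
def quadS {N M : ℕ} (xi lam : Fin N → ℝ) (ze mu : Fin M → ℝ) (f : ℝ × ℝ × ℝ → ℝ) : ℝ :=
  ∑ i, ∑ j, ∑ l, lam i * lam j * mu l * f (xi i * (1 - ze l), xi j * (1 - ze l), ze l)

/-- Membership in the H(curl)-underlying space U^{(1)}_k: ũ = p̃ +
(z^{k−1}/(1+z)^{k+1})·(z·∂r/∂x, z·∂r/∂y, −r) with
p̃ ∈ Q_{k+1}^{k−1,k,k−1} × Q_{k+1}^{k,k−1,k−1} × Q_{k+1}^{k,k,k−2} and r a polynomial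
of degree ≤ k in each of x and y. -/
def U1mem (k : ℕ) (u1 u2 u3 : (ℝ × ℝ × ℝ) → ℝ) : Prop :=
  ∃ p1 ∈ Qspace (k + 1) ((k : ℤ) - 1) k ((k : ℤ) - 1),
  ∃ p2 ∈ Qspace (k + 1) k ((k : ℤ) - 1) ((k : ℤ) - 1),
  ∃ p3 ∈ Qspace (k + 1) k k ((k : ℤ) - 2),
  ∃ r : MvPolynomial (Fin 2) ℝ, r.degreeOf 0 ≤ k ∧ r.degreeOf 1 ≤ k ∧
    (u1 = fun p => p1 p + p.2.2 ^ (k - 1) / (1 + p.2.2) ^ (k + 1) *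
        (p.2.2 * MvPolynomial.eval ![p.1, p.2.1] (MvPolynomial.pderiv 0 r))) ∧
    (u2 = fun p => p2 p + p.2.2 ^ (k - 1) / (1 + p.2.2) ^ (k + 1) *
        (p.2.2 * MvPolynomial.eval ![p.1, p.2.1] (MvPolynomial.pderiv 1 r))) ∧
    (u3 = fun p => p3 p + p.2.2 ^ (k - 1) / (1 + p.2.2) ^ (k + 1) *
        (-(MvPolynomial.eval ![p.1, p.2.1] r)))

section Aux

open Set MvPolynomial

def Mono (d1 d2 d3 : ℕ) : Submodule ℝ ((ℝ × ℝ × ℝ) → ℝ) :=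
  Submodule.span ℝ {f | ∃ a b c e : ℕ, a ≤ d1 ∧ b ≤ d2 ∧ c + e ≤ d3 ∧
    f = fun p => p.1 ^ a * p.2.1 ^ b * (p.2.2 ^ c * (1 - p.2.2) ^ e)}

lemma Mono_gen_mem {d1 d2 d3 a b c e : ℕ} (ha : a ≤ d1) (hb : b ≤ d2) (hce : c + e ≤ d3) :
    (fun p : ℝ × ℝ × ℝ => p.1 ^ a * p.2.1 ^ b * (p.2.2 ^ c * (1 - p.2.2) ^ e)) ∈ Mono d1 d2 d3 :=
  Submodule.subset_span ⟨a, b, c, e, ha, hb, hce, rfl⟩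

lemma Mono_mono {d1 d2 d3 d1' d2' d3' : ℕ} (h1 : d1 ≤ d1') (h2 : d2 ≤ d2') (h3 : d3 ≤ d3') :
    Mono d1 d2 d3 ≤ Mono d1' d2' d3' := by
  apply Submodule.span_mono
  rintro f ⟨a, b, c, e, ha, hb, hce, rfl⟩
  exact ⟨a, b, c, e, ha.trans h1, hb.trans h2, hce.trans h3, rfl⟩

lemma Mono_mul {d1 d2 d3 d1' d2' d3' : ℕ} {f g : (ℝ × ℝ × ℝ) → ℝ}
    (hf : f ∈ Mono d1 d2 d3) (hg : g ∈ Mono d1' d2' d3') :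
    (fun p => f p * g p) ∈ Mono (d1 + d1') (d2 + d2') (d3 + d3') := by
  induction hf using Submodule.span_induction with
  | mem f hf =>
    obtain ⟨a, b, c, e, ha, hb, hce, rfl⟩ := hf
    induction hg using Submodule.span_induction with
    | mem g hg =>
      obtain ⟨a', b', c', e', ha', hb', hce', rfl⟩ := hg
      have : (fun p : ℝ × ℝ × ℝ =>
          (p.1 ^ a * p.2.1 ^ b * (p.2.2 ^ c * (1 - p.2.2) ^ e)) *
          (p.1 ^ a' * p.2.1 ^ b' * (p.2.2 ^ c' * (1 - p.2.2) ^ e'))) =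
          fun p : ℝ × ℝ × ℝ => p.1 ^ (a + a') * p.2.1 ^ (b + b') *
            (p.2.2 ^ (c + c') * (1 - p.2.2) ^ (e + e')) := by
        funext p; simp only [pow_add]; ring
      rw [this]
      exact Mono_gen_mem (by omega) (by omega) (by omega)
    | zero =>
      have : (fun p : ℝ × ℝ × ℝ =>
          (p.1 ^ a * p.2.1 ^ b * (p.2.2 ^ c * (1 - p.2.2) ^ e)) * (0 : (ℝ×ℝ×ℝ) → ℝ) p) =
          (0 : (ℝ×ℝ×ℝ) → ℝ) := by funext p; simp
      rw [this]; exact Submodule.zero_mem _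
    | add g1 g2 h1 h2 ih1 ih2 =>
      have : (fun p : ℝ × ℝ × ℝ =>
          (p.1 ^ a * p.2.1 ^ b * (p.2.2 ^ c * (1 - p.2.2) ^ e)) * (g1 + g2) p) =
          (fun p => (p.1 ^ a * p.2.1 ^ b * (p.2.2 ^ c * (1 - p.2.2) ^ e)) * g1 p) +
          (fun p => (p.1 ^ a * p.2.1 ^ b * (p.2.2 ^ c * (1 - p.2.2) ^ e)) * g2 p) := by
        funext p; simp [mul_add]
      rw [this]; exact Submodule.add_mem _ ih1 ih2
    | smul t g hgmem ih =>
      have : (fun p : ℝ × ℝ × ℝ =>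
          (p.1 ^ a * p.2.1 ^ b * (p.2.2 ^ c * (1 - p.2.2) ^ e)) * (t • g) p) =
          t • (fun p => (p.1 ^ a * p.2.1 ^ b * (p.2.2 ^ c * (1 - p.2.2) ^ e)) * g p) := by
        funext p; simp [mul_comm, mul_assoc, mul_left_comm]
      rw [this]; exact Submodule.smul_mem _ _ ih
  | zero =>
    have : (fun p : ℝ × ℝ × ℝ => (0 : (ℝ×ℝ×ℝ) → ℝ) p * g p) = (0 : (ℝ×ℝ×ℝ) → ℝ) := by
      funext p; simp
    rw [this]; exact Submodule.zero_mem _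
  | add f1 f2 h1 h2 ih1 ih2 =>
    have : (fun p : ℝ × ℝ × ℝ => (f1 + f2) p * g p) =
        (fun p => f1 p * g p) + fun p => f2 p * g p := by
      funext p; simp [add_mul]
    rw [this]; exact Submodule.add_mem _ ih1 ih2
  | smul t f hfmem ih =>
    have : (fun p : ℝ × ℝ × ℝ => (t • f) p * g p) = t • fun p => f p * g p := by
      funext p; simp [mul_assoc]
    rw [this]; exact Submodule.smul_mem _ _ ih

lemma Mono_continuous {d1 d2 d3 : ℕ} {f : (ℝ × ℝ × ℝ) → ℝ} (hf : f ∈ Mono d1 d2 d3) :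
    Continuous f := by
  induction hf using Submodule.span_induction with
  | mem f hf =>
    obtain ⟨a, b, c, e, _, _, _, rfl⟩ := hf
    fun_prop
  | zero => exact continuous_zero
  | add f1 f2 h1 h2 ih1 ih2 => exact ih1.add ih2
  | smul t f hfmem ih => exact ih.const_smul t

lemma Q_rep {k t : ℕ} {l m n : ℤ} {d1 d2 d3 : ℕ} (ht : 1 ≤ t) (htk : t ≤ k + 1)
    (hl : l ≤ (d1 : ℤ)) (hm : m ≤ (d2 : ℤ)) (hn : n ≤ (k : ℤ) + 1 - t)
    (hd3 : k + 1 - t ≤ d3) {f : (ℝ × ℝ × ℝ) → ℝ} (hf : f ∈ Qspace (k + 1) l m n) :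
    ∃ G ∈ Mono d1 d2 d3, ∀ x y z : ℝ, z ≠ 1 →
      f (x, y, z / (1 - z)) = G (x, y, z) * (1 - z) ^ t := by
  induction hf using Submodule.span_induction with
  | mem f hf =>
    obtain ⟨a, b, c, hal, hbm, hcn, rfl⟩ := hf
    have ha : a ≤ d1 := by exact_mod_cast hal.trans hl
    have hb : b ≤ d2 := by exact_mod_cast hbm.trans hm
    have hc : c ≤ k + 1 - t := by
      have : (c : ℤ) ≤ (k : ℤ) + 1 - t := hcn.trans hn
      omega
    refine ⟨fun p => p.1 ^ a * p.2.1 ^ b * (p.2.2 ^ c * (1 - p.2.2) ^ (k + 1 - t - c)),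
      Mono_gen_mem ha hb (by omega), ?_⟩
    intro x y z hz
    have h1z : (1 : ℝ) - z ≠ 0 := sub_ne_zero_of_ne (Ne.symm hz)
    have hZ : 1 + z / (1 - z) = (1 - z)⁻¹ := by field_simp; ring
    have hk1 : k + 1 = c + (k + 1 - t - c) + t := by omega
    show x ^ a * y ^ b * (z / (1 - z)) ^ c / (1 + z / (1 - z)) ^ (k + 1) = _
    rw [hZ, inv_pow, div_inv_eq_mul, hk1, pow_add, pow_add, div_pow]
    rw [show c + (k + 1 - t - c) + t - t - c = k + 1 - t - c by omega]
    field_simp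
  | zero => exact ⟨0, Submodule.zero_mem _, fun x y z hz => by simp⟩
  | add f1 f2 h1 h2 ih1 ih2 =>
    obtain ⟨G1, hG1, hE1⟩ := ih1
    obtain ⟨G2, hG2, hE2⟩ := ih2
    exact ⟨G1 + G2, Submodule.add_mem _ hG1 hG2, fun x y z hz => by
      simp only [Pi.add_apply, hE1 x y z hz, hE2 x y z hz]; ring⟩
  | smul t' f hfmem ih =>
    obtain ⟨G, hG, hE⟩ := ih
    exact ⟨t' • G, Submodule.smul_mem _ _ hG, fun x y z hz => by
      simp only [Pi.smul_apply, smul_eq_mul, hE x y z hz]; ring⟩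


def genf (a b c e : ℕ) : (ℝ × ℝ × ℝ) → ℝ :=
  fun p => p.1 ^ a * p.2.1 ^ b * (p.2.2 ^ c * (1 - p.2.2) ^ e)

lemma genf_mem {d1 d2 d3 a b c e : ℕ} (ha : a ≤ d1) (hb : b ≤ d2) (hce : c + e ≤ d3) :
    genf a b c e ∈ Mono d1 d2 d3 := Mono_gen_mem ha hb hce

lemma eval_term_mem {q : MvPolynomial (Fin 2) ℝ} {d1 d2 d3 c : ℕ}
    (hs : ∀ m ∈ q.support, m 0 ≤ d1 ∧ m 1 ≤ d2) (hc : c ≤ d3) :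
    (fun p : ℝ × ℝ × ℝ => p.2.2 ^ c * MvPolynomial.eval ![p.1, p.2.1] q) ∈ Mono d1 d2 d3 := by
  have hfe : (fun p : ℝ × ℝ × ℝ => p.2.2 ^ c * MvPolynomial.eval ![p.1, p.2.1] q)
      = ∑ m ∈ q.support, q.coeff m • genf (m 0) (m 1) c 0 := by
    funext p
    rw [MvPolynomial.eval_eq']
    simp only [Finset.sum_apply, Pi.smul_apply, smul_eq_mul, Finset.mul_sum, Fin.prod_univ_two,
      genf, Matrix.cons_val_zero, Matrix.cons_val_one, Matrix.head_cons, pow_zero]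
    exact Finset.sum_congr rfl fun m _ => by ring
  rw [hfe]
  exact Submodule.sum_mem _ fun m hm =>
    Submodule.smul_mem _ _ (genf_mem (hs m hm).1 (hs m hm).2 (by omega))

lemma pderiv_eval_sum (i : Fin 2) (r : MvPolynomial (Fin 2) ℝ) (v : Fin 2 → ℝ) :
    MvPolynomial.eval v (MvPolynomial.pderiv i r)
      = ∑ m ∈ r.support, (r.coeff m * m i) *
          ((v 0) ^ ((m - Finsupp.single i 1 : Fin 2 →₀ ℕ) 0)
            * (v 1) ^ ((m - Finsupp.single i 1 : Fin 2 →₀ ℕ) 1)) := by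
  conv_lhs => rw [r.as_sum]
  rw [map_sum, map_sum]
  refine Finset.sum_congr rfl fun m _ => ?_
  rw [MvPolynomial.pderiv_monomial, MvPolynomial.eval_monomial]
  rw [Finsupp.prod_fintype _ _ (fun _ => pow_zero _)]
  rw [Fin.prod_univ_two]
  try ring

lemma pderiv_term_mem (r : MvPolynomial (Fin 2) ℝ) (i : Fin 2) {d1 d2 d3 c : ℕ}
    (hb : ∀ m ∈ r.support, (m - Finsupp.single i 1 : Fin 2 →₀ ℕ) 0 ≤ d1 ∧
      (m - Finsupp.single i 1 : Fin 2 →₀ ℕ) 1 ≤ d2)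
    (hc : c ≤ d3) :
    (fun p : ℝ × ℝ × ℝ => p.2.2 ^ c *
        MvPolynomial.eval ![p.1, p.2.1] (MvPolynomial.pderiv i r)) ∈ Mono d1 d2 d3 := by
  have hfe : (fun p : ℝ × ℝ × ℝ => p.2.2 ^ c *
        MvPolynomial.eval ![p.1, p.2.1] (MvPolynomial.pderiv i r))
      = ∑ m ∈ r.support, (r.coeff m * m i) •
          genf ((m - Finsupp.single i 1 : Fin 2 →₀ ℕ) 0)
            ((m - Finsupp.single i 1 : Fin 2 →₀ ℕ) 1) c 0 := by
    funext p
    rw [pderiv_eval_sum]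
    simp only [Finset.sum_apply, Pi.smul_apply, smul_eq_mul, Finset.mul_sum, genf,
      Matrix.cons_val_zero, Matrix.cons_val_one, Matrix.head_cons, pow_zero]
    exact Finset.sum_congr rfl fun m _ => by ring
  rw [hfe]
  exact Submodule.sum_mem _ fun m hm =>
    Submodule.smul_mem _ _ (genf_mem (hb m hm).1 (hb m hm).2 (by omega))

def psiMap (p : ℝ × ℝ × ℝ) : ℝ × ℝ × ℝ := (p.1 * (1 - p.2.2), p.2.1 * (1 - p.2.2), p.2.2)

def e3 : (ℝ × ℝ × ℝ) ≃ₗ[ℝ] (Fin 3 → ℝ) where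
  toFun p := ![p.1, p.2.1, p.2.2]
  invFun v := (v 0, v 1, v 2)
  map_add' p q := by funext i; fin_cases i <;> simp
  map_smul' t p := by funext i; fin_cases i <;> simp
  left_inv p := rfl
  right_inv v := by funext i; fin_cases i <;> simp

def pi1 : (ℝ × ℝ × ℝ) →L[ℝ] ℝ := ContinuousLinearMap.fst ℝ ℝ (ℝ × ℝ)
def pi2 : (ℝ × ℝ × ℝ) →L[ℝ] ℝ :=
  (ContinuousLinearMap.fst ℝ ℝ ℝ).comp (ContinuousLinearMap.snd ℝ ℝ (ℝ × ℝ))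
def pi3 : (ℝ × ℝ × ℝ) →L[ℝ] ℝ :=
  (ContinuousLinearMap.snd ℝ ℝ ℝ).comp (ContinuousLinearMap.snd ℝ ℝ (ℝ × ℝ))

def Lmap (p : ℝ × ℝ × ℝ) : (ℝ × ℝ × ℝ) →L[ℝ] (ℝ × ℝ × ℝ) :=
  ((1 - p.2.2) • pi1 - p.1 • pi3).prod ((((1 - p.2.2) • pi2 - p.2.1 • pi3)).prod pi3)

lemma hasFDerivAt_psiMap (p : ℝ × ℝ × ℝ) : HasFDerivAt psiMap (Lmap p) p := by
  have h1 : HasFDerivAt (fun q : ℝ × ℝ × ℝ => q.1) pi1 p := hasFDerivAt_fst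
  have h2 : HasFDerivAt (fun q : ℝ × ℝ × ℝ => q.2.1) pi2 p :=
    (hasFDerivAt_fst (p := p.2)).comp p hasFDerivAt_snd
  have h3 : HasFDerivAt (fun q : ℝ × ℝ × ℝ => q.2.2) pi3 p :=
    (hasFDerivAt_snd (p := p.2)).comp p hasFDerivAt_snd
  have hz : HasFDerivAt (fun q : ℝ × ℝ × ℝ => 1 - q.2.2) (-pi3) p := by
    have := (hasFDerivAt_const (1:ℝ) p).sub h3
    rw [zero_sub] at this
    exact this
  have hc1 : HasFDerivAt (fun q : ℝ × ℝ × ℝ => q.1 * (1 - q.2.2))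
      ((1 - p.2.2) • pi1 - p.1 • pi3) p := by
    have := h1.mul hz
    rw [show ((1 - p.2.2) • pi1 - p.1 • pi3) = p.1 • -pi3 + (1 - p.2.2) • pi1 by
      ext v <;> simp <;> ring]
    exact this
  have hc2 : HasFDerivAt (fun q : ℝ × ℝ × ℝ => q.2.1 * (1 - q.2.2))
      ((1 - p.2.2) • pi2 - p.2.1 • pi3) p := by
    have := h2.mul hz
    rw [show ((1 - p.2.2) • pi2 - p.2.1 • pi3) = p.2.1 • -pi3 + (1 - p.2.2) • pi2 by
      ext v <;> simp <;> ring]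
    exact this
  exact hc1.prodMk (hc2.prodMk h3)

lemma Lmap_det (p : ℝ × ℝ × ℝ) : (Lmap p).det = (1 - p.2.2) ^ 2 := by
  have hL : (Lmap p).toLinearMap =
      (e3.symm : (Fin 3 → ℝ) →ₗ[ℝ] (ℝ × ℝ × ℝ)) ∘ₗ
        (Matrix.toLin' !![1 - p.2.2, 0, -p.1; 0, 1 - p.2.2, -p.2.1; 0, 0, 1]) ∘ₗ
        (e3.symm.symm : (ℝ × ℝ × ℝ) →ₗ[ℝ] (Fin 3 → ℝ)) := by
    apply LinearMap.ext
    intro v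
    show Lmap p v = e3.symm (Matrix.toLin' _ (e3 v))
    have he3 : ∀ q, e3 q = ![q.1, q.2.1, q.2.2] := fun _ => rfl
    have he3s : ∀ w, e3.symm w = (w 0, w 1, w 2) := fun _ => rfl
    simp only [Lmap, pi1, pi2, pi3, he3, he3s, Matrix.toLin'_apply, ContinuousLinearMap.prod_apply,
      ContinuousLinearMap.sub_apply, ContinuousLinearMap.smul_apply,
      ContinuousLinearMap.coe_fst', ContinuousLinearMap.coe_comp',
      ContinuousLinearMap.coe_snd', Function.comp_apply, LinearEquiv.coe_symm_mk,
      LinearEquiv.coe_mk, smul_eq_mul]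
    refine Prod.ext ?_ (Prod.ext ?_ ?_)
    · simp [Matrix.mulVec, dotProduct, Fin.sum_univ_three]; ring
    · simp [Matrix.mulVec, dotProduct, Fin.sum_univ_three]; ring
    · simp [Matrix.mulVec, dotProduct, Fin.sum_univ_three]
  have : (Lmap p).det = LinearMap.det (Lmap p).toLinearMap := rfl
  rw [this, hL, LinearMap.det_conj, LinearMap.det_toLin', Matrix.det_fin_three]
  simp
  ring

def cube : Set (ℝ × ℝ × ℝ) := Icc 0 1 ×ˢ (Icc 0 1 ×ˢ Icc 0 1)
def sset : Set (ℝ × ℝ × ℝ) := Icc 0 1 ×ˢ (Icc 0 1 ×ˢ Ico 0 1)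

lemma meas_sset : MeasurableSet sset :=
  measurableSet_Icc.prod (measurableSet_Icc.prod measurableSet_Ico)

lemma meas_cube : MeasurableSet cube :=
  measurableSet_Icc.prod (measurableSet_Icc.prod measurableSet_Icc)

lemma compact_cube : IsCompact cube :=
  isCompact_Icc.prod (isCompact_Icc.prod isCompact_Icc)

lemma null_z1 : volume {p : ℝ × ℝ × ℝ | p.2.2 = 1} = 0 := by
  have h : {p : ℝ × ℝ × ℝ | p.2.2 = 1} = (univ : Set ℝ) ×ˢ ((univ : Set ℝ) ×ˢ ({1} : Set ℝ)) := by
    ext ⟨x, y, z⟩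
    simp [Set.mem_prod, eq_comm]
  rw [h, Measure.volume_eq_prod, Measure.prod_prod, Measure.volume_eq_prod, Measure.prod_prod]
  simp

lemma psi_injOn : InjOn psiMap sset := by
  rintro p hp q hq h
  simp only [sset, mem_prod, mem_Icc, mem_Ico] at hp hq
  have hz : p.2.2 = q.2.2 := congrArg (fun r => r.2.2) h
  have h1z : (1 : ℝ) - p.2.2 ≠ 0 := by
    have h2 := hp.2.2.2
    intro hc
    rw [sub_eq_zero] at hc
    rw [← hc] at h2
    exact lt_irrefl _ h2
  have h1 : p.1 * (1 - p.2.2) = q.1 * (1 - p.2.2) := by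
    have := congrArg (fun r => r.1) h; simpa [psiMap, hz] using this
  have h2 : p.2.1 * (1 - p.2.2) = q.2.1 * (1 - p.2.2) := by
    have := congrArg (fun r => r.2.1) h; simpa [psiMap, hz] using this
  exact Prod.ext (mul_right_cancel₀ h1z h1)
    (Prod.ext (mul_right_cancel₀ h1z h2) hz)

lemma psi_image_subset : psiMap '' sset ⊆ Khat := by
  rintro - ⟨p, hp, rfl⟩
  simp only [sset, mem_prod, mem_Icc, mem_Ico] at hp
  obtain ⟨h1, h2, h3⟩ := hp
  simp only [Khat, psiMap, mem_setOf_eq]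
  have hz : (0:ℝ) ≤ 1 - p.2.2 := by linarith [h3.2]
  refine ⟨h3.1, by linarith [h3.2], mul_nonneg h1.1 hz, ?_, mul_nonneg h2.1 hz, ?_⟩
  · calc p.1 * (1 - p.2.2) ≤ 1 * (1 - p.2.2) := by nlinarith [h1.2]
      _ = 1 - p.2.2 := one_mul _
  · calc p.2.1 * (1 - p.2.2) ≤ 1 * (1 - p.2.2) := by nlinarith [h2.2]
      _ = 1 - p.2.2 := one_mul _

lemma psi_image_mem {p : ℝ × ℝ × ℝ} (hp : p ∈ Khat) (hz : p.2.2 ≠ 1) : p ∈ psiMap '' sset := by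
  simp only [Khat, mem_setOf_eq] at hp
  obtain ⟨h1, h2, h3, h4, h5, h6⟩ := hp
  have hlt : p.2.2 < 1 := lt_of_le_of_ne h2 hz
  have h1z : (0:ℝ) < 1 - p.2.2 := by linarith
  refine ⟨(p.1 / (1 - p.2.2), p.2.1 / (1 - p.2.2), p.2.2), ?_, ?_⟩
  · simp only [sset, mem_prod, mem_Icc, mem_Ico]
    exact ⟨⟨div_nonneg h3 h1z.le, (div_le_one h1z).2 (by linarith)⟩,
      ⟨div_nonneg h5 h1z.le, (div_le_one h1z).2 (by linarith)⟩, h1, hlt⟩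
  · simp only [psiMap]
    rw [div_mul_cancel₀ _ h1z.ne', div_mul_cancel₀ _ h1z.ne']

lemma khat_ae_image : Khat =ᵐ[volume] psiMap '' sset := by
  rw [MeasureTheory.ae_eq_set]
  constructor
  · refine measure_mono_null ?_ null_z1
    rintro p ⟨hp, hp2⟩
    by_contra h
    exact hp2 (psi_image_mem hp h)
  · have : psiMap '' sset \ Khat = ∅ := diff_eq_empty.2 psi_image_subset
    rw [this]; exact measure_empty

lemma sset_ae_cube : sset =ᵐ[volume] cube := by
  rw [MeasureTheory.ae_eq_set]
  constructor
  · have : sset \ cube = ∅ := diff_eq_empty.2 (by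
      rintro p hp
      simp only [sset, cube, mem_prod, mem_Icc, mem_Ico] at hp ⊢
      exact ⟨hp.1, hp.2.1, hp.2.2.1, hp.2.2.2.le⟩)
    rw [this]; exact measure_empty
  · refine measure_mono_null ?_ null_z1
    rintro p ⟨hp, hn⟩
    simp only [sset, cube, mem_prod, mem_Icc, mem_Ico] at hp hn
    simp only [mem_setOf_eq]
    by_contra h
    exact hn ⟨hp.1, hp.2.1, hp.2.2.1, lt_of_le_of_ne hp.2.2.2 h⟩

lemma Mono_integrableOn {d1 d2 d3 : ℕ} {G : (ℝ × ℝ × ℝ) → ℝ} (hG : G ∈ Mono d1 d2 d3) :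
    IntegrableOn (fun p : ℝ × ℝ × ℝ => (1 - p.2.2) ^ 2 * G p) cube volume := by
  have hc : Continuous fun p : ℝ × ℝ × ℝ => (1 - p.2.2) ^ 2 * G p := by
    have := Mono_continuous hG
    fun_prop
  exact hc.continuousOn.integrableOn_compact compact_cube

lemma cube_exact {k : ℕ} {N M : ℕ} (xi lam : Fin N → ℝ) (ze mu : Fin M → ℝ)
    (hxi : ∀ g : Polynomial ℝ, g.natDegree ≤ 2 * k + 1 →
      ∑ i, lam i * g.eval (xi i) = ∫ x in (0:ℝ)..1, g.eval x)
    (hmu : ∀ h : Polynomial ℝ, h.natDegree ≤ 2 * k + 1 →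
      ∑ l, mu l * h.eval (ze l) = ∫ z in (0:ℝ)..1, (1 - z) ^ 2 * h.eval z)
    {d1 d2 d3 : ℕ} (hd1 : d1 ≤ 2 * k + 1) (hd2 : d2 ≤ 2 * k + 1) (hd3 : d3 ≤ 2 * k + 1)
    {G : (ℝ × ℝ × ℝ) → ℝ} (hG : G ∈ Mono d1 d2 d3) :
    ∑ i, ∑ j, ∑ l, lam i * lam j * mu l * G (xi i, xi j, ze l)
      = ∫ p in cube, (1 - p.2.2) ^ 2 * G p := by
  induction hG using Submodule.span_induction with
  | mem f hf =>
    obtain ⟨a, b, c, e, ha, hb, hce, rfl⟩ := hf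
    -- 1-d facts
    have poly1 : ∀ n : ℕ, n ≤ 2 * k + 1 →
        ∑ i, lam i * (xi i) ^ n = ∫ x in Icc (0:ℝ) 1, x ^ n := by
      intro n hn
      have h := hxi (Polynomial.X ^ n) (by simpa using hn)
      simp only [Polynomial.eval_pow, Polynomial.eval_X] at h
      rw [h, intervalIntegral.integral_of_le zero_le_one,
        MeasureTheory.integral_Icc_eq_integral_Ioc]
    have poly3 : ∑ l, mu l * ((ze l) ^ c * (1 - ze l) ^ e)
        = ∫ z in Icc (0:ℝ) 1, (1 - z) ^ 2 * (z ^ c * (1 - z) ^ e) := by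
      have hdeg : (Polynomial.X ^ c * (1 - Polynomial.X : Polynomial ℝ) ^ e).natDegree
          ≤ 2 * k + 1 := by
        refine le_trans (Polynomial.natDegree_mul_le) ?_
        have h1 : ((1 - Polynomial.X : Polynomial ℝ) ^ e).natDegree ≤ e * 1 :=
          le_trans (Polynomial.natDegree_pow_le)
            (by gcongr; exact le_trans (Polynomial.natDegree_sub_le _ _) (by simp))
        have h2 : ((Polynomial.X : Polynomial ℝ) ^ c).natDegree ≤ c := by simp
        omega
      have h := hmu (Polynomial.X ^ c * (1 - Polynomial.X) ^ e) hdeg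
      simp only [Polynomial.eval_mul, Polynomial.eval_pow, Polynomial.eval_sub,
        Polynomial.eval_one, Polynomial.eval_X] at h
      rw [h, intervalIntegral.integral_of_le zero_le_one,
        MeasureTheory.integral_Icc_eq_integral_Ioc]
    -- factor the triple sum
    have hsum : ∑ i, ∑ j, ∑ l, lam i * lam j * mu l *
        ((xi i) ^ a * (xi j) ^ b * ((ze l) ^ c * (1 - ze l) ^ e))
        = (∑ i, lam i * (xi i) ^ a) * ((∑ j, lam j * (xi j) ^ b) *
            (∑ l, mu l * ((ze l) ^ c * (1 - ze l) ^ e))) := by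
      have step : ∑ i, ∑ j, ∑ l, lam i * lam j * mu l *
          ((xi i) ^ a * (xi j) ^ b * ((ze l) ^ c * (1 - ze l) ^ e))
          = ∑ i, ∑ j, ∑ l, (lam i * (xi i) ^ a) * ((lam j * (xi j) ^ b) *
              (mu l * ((ze l) ^ c * (1 - ze l) ^ e))) :=
        Finset.sum_congr rfl fun i _ => Finset.sum_congr rfl fun j _ =>
          Finset.sum_congr rfl fun l _ => by ring
      rw [step]
      simp only [← Finset.mul_sum, ← Finset.sum_mul]
    -- factor the integral
    have hfun : (fun p : ℝ × ℝ × ℝ =>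
        (1 - p.2.2) ^ 2 * (p.1 ^ a * p.2.1 ^ b * (p.2.2 ^ c * (1 - p.2.2) ^ e)))
        = fun p : ℝ × ℝ × ℝ => p.1 ^ a *
            ((fun q : ℝ × ℝ => q.1 ^ b * ((1 - q.2) ^ 2 * (q.2 ^ c * (1 - q.2) ^ e))) p.2) := by
      funext p; ring
    have hint : ∫ p in cube, (1 - p.2.2) ^ 2 *
        (p.1 ^ a * p.2.1 ^ b * (p.2.2 ^ c * (1 - p.2.2) ^ e))
        = (∫ x in Icc (0:ℝ) 1, x ^ a) * ((∫ y in Icc (0:ℝ) 1, y ^ b) *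
            (∫ z in Icc (0:ℝ) 1, (1 - z) ^ 2 * (z ^ c * (1 - z) ^ e))) := by
      rw [hfun]
      unfold cube
      have h2 := MeasureTheory.setIntegral_prod_mul (μ := (volume : Measure ℝ))
        (ν := (volume : Measure (ℝ × ℝ))) (fun x : ℝ => x ^ a)
        (fun q : ℝ × ℝ => q.1 ^ b * ((1 - q.2) ^ 2 * (q.2 ^ c * (1 - q.2) ^ e)))
        (Icc 0 1) (Icc 0 1 ×ˢ Icc 0 1)
      rw [← Measure.volume_eq_prod] at h2
      rw [h2]
      congr 1
      have h3 := MeasureTheory.setIntegral_prod_mul (μ := (volume : Measure ℝ))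
        (ν := (volume : Measure ℝ)) (fun y : ℝ => y ^ b)
        (fun z : ℝ => (1 - z) ^ 2 * (z ^ c * (1 - z) ^ e)) (Icc 0 1) (Icc 0 1)
      rw [← Measure.volume_eq_prod] at h3
      rw [h3]
    rw [hsum, hint, poly1 a (le_trans ha hd1), poly1 b (le_trans hb hd2), poly3]
  | zero => simp
  | add f1 f2 h1 h2 ih1 ih2 =>
    have hadd : (fun p : ℝ × ℝ × ℝ => (1 - p.2.2) ^ 2 * (f1 + f2) p)
        = fun p => (1 - p.2.2) ^ 2 * f1 p + (1 - p.2.2) ^ 2 * f2 p := by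
      funext p; simp [mul_add]
    have : ∫ p in cube, (1 - p.2.2) ^ 2 * (f1 + f2) p
        = (∫ p in cube, (1 - p.2.2) ^ 2 * f1 p) + ∫ p in cube, (1 - p.2.2) ^ 2 * f2 p := by
      rw [hadd]
      exact integral_add (Mono_integrableOn h1) (Mono_integrableOn h2)
    rw [this, ← ih1, ← ih2]
    simp only [Pi.add_apply, mul_add, Finset.sum_add_distrib]
  | smul t f hfmem ih =>
    have h1 : ∑ i, ∑ j, ∑ l, lam i * lam j * mu l * (t • f) (xi i, xi j, ze l)
        = t * ∑ i, ∑ j, ∑ l, lam i * lam j * mu l * f (xi i, xi j, ze l) := by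
      simp only [Pi.smul_apply, smul_eq_mul, Finset.mul_sum]
      refine Finset.sum_congr rfl fun i _ => Finset.sum_congr rfl fun j _ =>
        Finset.sum_congr rfl fun l _ => by ring
    have h2 : (fun p : ℝ × ℝ × ℝ => (1 - p.2.2) ^ 2 * (t • f) p)
        = fun p => t * ((1 - p.2.2) ^ 2 * f p) := by
      funext p; simp [Pi.smul_apply, smul_eq_mul]; ring
    rw [h1, ih, h2, integral_const_mul]


instance : Measure.IsAddHaarMeasure (volume : Measure (ℝ × ℝ)) := by
  rw [Measure.volume_eq_prod]
  infer_instance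

instance : Measure.IsAddHaarMeasure (volume : Measure (ℝ × ℝ × ℝ)) := by
  rw [Measure.volume_eq_prod]
  infer_instance

lemma sset_subset_cube : sset ⊆ cube := by
  intro p hp
  simp only [sset, cube, Set.mem_prod, Set.mem_Icc, Set.mem_Ico] at hp ⊢
  exact ⟨hp.1, hp.2.1, hp.2.2.1, hp.2.2.2.le⟩

lemma alg1 (k' : ℕ) (z A D : ℝ) (hz : z ≠ 1) :
    (1 + z / (1 - z)) * (A * (1 - z) ^ 1 +
        (z / (1 - z)) ^ k' / (1 + z / (1 - z)) ^ (k' + 2) * (z / (1 - z) * D))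
      = A + z ^ (k' + 1) * D := by
  have h1z : (1 : ℝ) - z ≠ 0 := sub_ne_zero_of_ne (Ne.symm hz)
  have hZ : 1 + z / (1 - z) = (1 - z)⁻¹ := by field_simp; ring
  rw [hZ, inv_pow, div_inv_eq_mul, div_pow]
  field_simp
  ring

lemma alg3 (k' : ℕ) (z A R : ℝ) (hz : z ≠ 1) :
    (1 + z / (1 - z)) ^ 2 * (A * (1 - z) ^ 2 +
        (z / (1 - z)) ^ k' / (1 + z / (1 - z)) ^ (k' + 2) * (-R))
      = A - z ^ k' * R := by
  have h1z : (1 : ℝ) - z ≠ 0 := sub_ne_zero_of_ne (Ne.symm hz)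
  have hZ : 1 + z / (1 - z) = (1 - z)⁻¹ := by field_simp; ring
  rw [hZ, div_pow, inv_pow, inv_pow]
  field_simp
  ring

lemma phiInv_psi (x y z : ℝ) (hz : z ≠ 1) :
    phiInv (x * (1 - z), y * (1 - z), z) = (x, y, z / (1 - z)) := by
  have h1z : (1 : ℝ) - z ≠ 0 := sub_ne_zero_of_ne (Ne.symm hz)
  simp only [phiInv]
  rw [mul_div_cancel_right₀ _ h1z, mul_div_cancel_right₀ _ h1z]

lemma uh_rep (k : ℕ) (hk : 1 ≤ k) (u1 u2 u3 : (ℝ × ℝ × ℝ) → ℝ)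
    (uh : Fin 3 → (ℝ × ℝ × ℝ) → ℝ) (hu : U1mem k u1 u2 u3)
    (huh : ∀ p : ℝ × ℝ × ℝ, p.2.2 ≠ 1 →
      uh 0 p = (1 + (phiInv p).2.2) * u1 (phiInv p) ∧
      uh 1 p = (1 + (phiInv p).2.2) * u2 (phiInv p) ∧
      uh 2 p = (1 + (phiInv p).2.2) *
        ((phiInv p).1 * u1 (phiInv p) + (phiInv p).2.1 * u2 (phiInv p) +
          (1 + (phiInv p).2.2) * u3 (phiInv p))) :
    ∃ G0 ∈ Mono k k k, ∃ G1 ∈ Mono k k k, ∃ G2 ∈ Mono k k k,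
      ∀ x y z : ℝ, z ≠ 1 →
        uh 0 (x * (1 - z), y * (1 - z), z) = G0 (x, y, z) ∧
        uh 1 (x * (1 - z), y * (1 - z), z) = G1 (x, y, z) ∧
        uh 2 (x * (1 - z), y * (1 - z), z) = G2 (x, y, z) := by
  obtain ⟨k', rfl⟩ : ∃ k', k = k' + 1 := ⟨k - 1, by omega⟩
  obtain ⟨p1, hp1, p2, hp2, p3, hp3, r, hr0, hr1, he1, he2, he3⟩ := hu
  obtain ⟨G1q, hG1qm, hG1q⟩ := Q_rep (k := k' + 1) (t := 1) (d1 := k') (d2 := k' + 1)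
    (d3 := k' + 1) le_rfl (by omega) (by push_cast; omega) (by push_cast; omega)
    (by push_cast; omega) (by omega) hp1
  obtain ⟨G2q, hG2qm, hG2q⟩ := Q_rep (k := k' + 1) (t := 1) (d1 := k' + 1) (d2 := k')
    (d3 := k' + 1) le_rfl (by omega) (by push_cast; omega) (by push_cast; omega)
    (by push_cast; omega) (by omega) hp2
  obtain ⟨G3q, hG3qm, hG3q⟩ := Q_rep (k := k' + 1) (t := 2) (d1 := k' + 1) (d2 := k' + 1)
    (d3 := k' + 1) (by omega) (by omega) (by push_cast; omega) (by push_cast; omega)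
    (by push_cast; omega) (by omega) hp3
  have hsup : ∀ m ∈ r.support, m 0 ≤ k' + 1 ∧ m 1 ≤ k' + 1 := fun m hm =>
    ⟨le_trans (MvPolynomial.monomial_le_degreeOf 0 hm) hr0,
      le_trans (MvPolynomial.monomial_le_degreeOf 1 hm) hr1⟩
  have hb0 : ∀ m ∈ r.support, (m - Finsupp.single (0 : Fin 2) 1 : Fin 2 →₀ ℕ) 0 ≤ k' ∧
      (m - Finsupp.single (0 : Fin 2) 1 : Fin 2 →₀ ℕ) 1 ≤ k' + 1 := by
    intro m hm
    constructor
    · rw [Finsupp.tsub_apply, Finsupp.single_eq_same]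
      have := (hsup m hm).1; omega
    · rw [Finsupp.tsub_apply, Finsupp.single_eq_of_ne' (by decide : (0 : Fin 2) ≠ 1)]
      have := (hsup m hm).2; omega
  have hb1 : ∀ m ∈ r.support, (m - Finsupp.single (1 : Fin 2) 1 : Fin 2 →₀ ℕ) 0 ≤ k' + 1 ∧
      (m - Finsupp.single (1 : Fin 2) 1 : Fin 2 →₀ ℕ) 1 ≤ k' := by
    intro m hm
    constructor
    · rw [Finsupp.tsub_apply, Finsupp.single_eq_of_ne' (by decide : (1 : Fin 2) ≠ 0)]
      have := (hsup m hm).1; omega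
    · rw [Finsupp.tsub_apply, Finsupp.single_eq_same]
      have := (hsup m hm).2; omega
  set Gr1 : (ℝ × ℝ × ℝ) → ℝ :=
    fun q => q.2.2 ^ (k' + 1) * MvPolynomial.eval ![q.1, q.2.1] (MvPolynomial.pderiv 0 r)
    with hGr1def
  set Gr2 : (ℝ × ℝ × ℝ) → ℝ :=
    fun q => q.2.2 ^ (k' + 1) * MvPolynomial.eval ![q.1, q.2.1] (MvPolynomial.pderiv 1 r)
    with hGr2def
  set Gr3 : (ℝ × ℝ × ℝ) → ℝ :=
    fun q => q.2.2 ^ k' * MvPolynomial.eval ![q.1, q.2.1] r with hGr3def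
  have hGr1m : Gr1 ∈ Mono k' (k' + 1) (k' + 1) := pderiv_term_mem r 0 hb0 le_rfl
  have hGr2m : Gr2 ∈ Mono (k' + 1) k' (k' + 1) := pderiv_term_mem r 1 hb1 le_rfl
  have hGr3m : Gr3 ∈ Mono (k' + 1) (k' + 1) (k' + 1) := eval_term_mem hsup (by omega)
  set G0 : (ℝ × ℝ × ℝ) → ℝ := G1q + Gr1 with hG0def
  set G1 : (ℝ × ℝ × ℝ) → ℝ := G2q + Gr2 with hG1def
  have hG0m' : G0 ∈ Mono k' (k' + 1) (k' + 1) := Submodule.add_mem _ hG1qm hGr1m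
  have hG1m' : G1 ∈ Mono (k' + 1) k' (k' + 1) := Submodule.add_mem _ hG2qm hGr2m
  have hG0m : G0 ∈ Mono (k' + 1) (k' + 1) (k' + 1) :=
    Mono_mono (by omega) le_rfl le_rfl hG0m'
  have hG1m : G1 ∈ Mono (k' + 1) (k' + 1) (k' + 1) :=
    Mono_mono le_rfl (by omega) le_rfl hG1m'
  -- value identities
  have hval0 : ∀ x y z : ℝ, z ≠ 1 →
      (1 + z / (1 - z)) * u1 (x, y, z / (1 - z)) = G0 (x, y, z) := by
    intro x y z hz
    rw [he1]
    show (1 + z / (1 - z)) * (p1 (x, y, z / (1 - z)) +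
        (z / (1 - z)) ^ (k' + 1 - 1) / (1 + z / (1 - z)) ^ (k' + 1 + 1) *
          (z / (1 - z) * MvPolynomial.eval ![x, y] (MvPolynomial.pderiv 0 r))) = _
    rw [hG1q x y z hz]
    simp only [Nat.add_sub_cancel, hG0def, Pi.add_apply, hGr1def]
    exact alg1 k' z (G1q (x, y, z)) (MvPolynomial.eval ![x, y] (MvPolynomial.pderiv 0 r)) hz
  have hval1 : ∀ x y z : ℝ, z ≠ 1 →
      (1 + z / (1 - z)) * u2 (x, y, z / (1 - z)) = G1 (x, y, z) := by
    intro x y z hz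
    rw [he2]
    show (1 + z / (1 - z)) * (p2 (x, y, z / (1 - z)) +
        (z / (1 - z)) ^ (k' + 1 - 1) / (1 + z / (1 - z)) ^ (k' + 1 + 1) *
          (z / (1 - z) * MvPolynomial.eval ![x, y] (MvPolynomial.pderiv 1 r))) = _
    rw [hG2q x y z hz]
    simp only [Nat.add_sub_cancel, hG1def, Pi.add_apply, hGr2def]
    exact alg1 k' z (G2q (x, y, z)) (MvPolynomial.eval ![x, y] (MvPolynomial.pderiv 1 r)) hz
  have hval3 : ∀ x y z : ℝ, z ≠ 1 →
      (1 + z / (1 - z)) ^ 2 * u3 (x, y, z / (1 - z))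
        = G3q (x, y, z) - z ^ k' * MvPolynomial.eval ![x, y] r := by
    intro x y z hz
    rw [he3]
    show (1 + z / (1 - z)) ^ 2 * (p3 (x, y, z / (1 - z)) +
        (z / (1 - z)) ^ (k' + 1 - 1) / (1 + z / (1 - z)) ^ (k' + 1 + 1) *
          (-(MvPolynomial.eval ![x, y] r))) = _
    rw [hG3q x y z hz]
    simp only [Nat.add_sub_cancel]
    exact alg3 k' z (G3q (x, y, z)) (MvPolynomial.eval ![x, y] r) hz
  -- the third component
  set G2 : (ℝ × ℝ × ℝ) → ℝ :=
    fun q => q.1 * G0 q + q.2.1 * G1 q + (G3q q - Gr3 q) with hG2def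
  have hxmem : (fun q : ℝ × ℝ × ℝ => q.1) ∈ Mono 1 0 0 := by
    have hh : (fun q : ℝ × ℝ × ℝ => q.1) = genf 1 0 0 0 := by
      funext q; simp [genf]
    rw [hh]; exact genf_mem le_rfl le_rfl le_rfl
  have hymem : (fun q : ℝ × ℝ × ℝ => q.2.1) ∈ Mono 0 1 0 := by
    have hh : (fun q : ℝ × ℝ × ℝ => q.2.1) = genf 0 1 0 0 := by
      funext q; simp [genf]
    rw [hh]; exact genf_mem le_rfl le_rfl le_rfl
  have hG2m : G2 ∈ Mono (k' + 1) (k' + 1) (k' + 1) := by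
    have h1 : (fun q : ℝ × ℝ × ℝ => q.1 * G0 q) ∈ Mono (k' + 1) (k' + 1) (k' + 1) :=
      Mono_mono (by omega) (by omega) (by omega) (Mono_mul hxmem hG0m')
    have h2 : (fun q : ℝ × ℝ × ℝ => q.2.1 * G1 q) ∈ Mono (k' + 1) (k' + 1) (k' + 1) :=
      Mono_mono (by omega) (by omega) (by omega) (Mono_mul hymem hG1m')
    have h3 : G3q - Gr3 ∈ Mono (k' + 1) (k' + 1) (k' + 1) :=
      Submodule.sub_mem _ hG3qm hGr3m
    have hh : G2 = (fun q : ℝ × ℝ × ℝ => q.1 * G0 q) +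
        ((fun q : ℝ × ℝ × ℝ => q.2.1 * G1 q) + (G3q - Gr3)) := by
      funext q
      simp only [hG2def, Pi.add_apply, Pi.sub_apply]
      ring
    rw [hh]
    exact Submodule.add_mem _ h1 (Submodule.add_mem _ h2 h3)
  refine ⟨G0, hG0m, G1, hG1m, G2, hG2m, ?_⟩
  intro x y z hz
  have hph := phiInv_psi x y z hz
  obtain ⟨h0, h1, h2⟩ := huh (x * (1 - z), y * (1 - z), z) hz
  refine ⟨?_, ?_, ?_⟩
  · rw [h0, hph]
    exact hval0 x y z hz
  · rw [h1, hph]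
    exact hval1 x y z hz
  · rw [h2, hph]
    have hexp : (1 + z / (1 - z)) *
        (x * u1 (x, y, z / (1 - z)) + y * u2 (x, y, z / (1 - z)) +
          (1 + z / (1 - z)) * u3 (x, y, z / (1 - z)))
        = x * ((1 + z / (1 - z)) * u1 (x, y, z / (1 - z))) +
          y * ((1 + z / (1 - z)) * u2 (x, y, z / (1 - z))) +
          (1 + z / (1 - z)) ^ 2 * u3 (x, y, z / (1 - z)) := by ring
    rw [hexp, hval0 x y z hz, hval1 x y z hz, hval3 x y z hz]

end Aux

/-- for ũ, ṽ ∈ U^{(1)}_k and a constant matrix A, the function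
F = ∑_{i,j} A_{ij} ûᵢ v̂ⱼ (where û, v̂ are obtained via the covariant 1-form
transformation through φ) is integrable on K̂ and the conical product rule of
order k ≥ 1 is exact for it. -/
theorem stmt_5 (k : ℕ) (hk : 1 ≤ k) {N M : ℕ} (xi lam : Fin N → ℝ) (ze mu : Fin M → ℝ)
    (hze : ∀ l, ze l ∈ Set.Ico (0 : ℝ) 1)
    (hxi : ∀ g : Polynomial ℝ, g.natDegree ≤ 2 * k + 1 →
      ∑ i, lam i * g.eval (xi i) = ∫ x in (0:ℝ)..1, g.eval x)
    (hmu : ∀ h : Polynomial ℝ, h.natDegree ≤ 2 * k + 1 →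
      ∑ l, mu l * h.eval (ze l) = ∫ z in (0:ℝ)..1, (1 - z) ^ 2 * h.eval z)
    (u1 u2 u3 v1 v2 v3 : (ℝ × ℝ × ℝ) → ℝ)
    (hu : U1mem k u1 u2 u3) (hv : U1mem k v1 v2 v3)
    (A : Matrix (Fin 3) (Fin 3) ℝ)
    (uh vh : Fin 3 → (ℝ × ℝ × ℝ) → ℝ)
    (huh : ∀ p : ℝ × ℝ × ℝ, p.2.2 ≠ 1 →
      uh 0 p = (1 + (phiInv p).2.2) * u1 (phiInv p) ∧
      uh 1 p = (1 + (phiInv p).2.2) * u2 (phiInv p) ∧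
      uh 2 p = (1 + (phiInv p).2.2) *
        ((phiInv p).1 * u1 (phiInv p) + (phiInv p).2.1 * u2 (phiInv p) +
          (1 + (phiInv p).2.2) * u3 (phiInv p)))
    (hvh : ∀ p : ℝ × ℝ × ℝ, p.2.2 ≠ 1 →
      vh 0 p = (1 + (phiInv p).2.2) * v1 (phiInv p) ∧
      vh 1 p = (1 + (phiInv p).2.2) * v2 (phiInv p) ∧
      vh 2 p = (1 + (phiInv p).2.2) *
        ((phiInv p).1 * v1 (phiInv p) + (phiInv p).2.1 * v2 (phiInv p) +
          (1 + (phiInv p).2.2) * v3 (phiInv p)))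
    (F : (ℝ × ℝ × ℝ) → ℝ)
    (hF : F = fun p => ∑ i : Fin 3, ∑ j : Fin 3, A i j * uh i p * vh j p) :
    IntegrableOn F Khat volume ∧ quadS xi lam ze mu F = ∫ p in Khat, F p := by
  obtain ⟨Gu0, hGu0m, Gu1, hGu1m, Gu2, hGu2m, hGu⟩ := uh_rep k hk u1 u2 u3 uh hu huh
  obtain ⟨Gv0, hGv0m, Gv1, hGv1m, Gv2, hGv2m, hGv⟩ := uh_rep k hk v1 v2 v3 vh hv hvh
  have hterm : ∀ (cst : ℝ) (P Q : (ℝ × ℝ × ℝ) → ℝ), P ∈ Mono k k k → Q ∈ Mono k k k →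
      (fun q => cst * P q * Q q) ∈ Mono (k + k) (k + k) (k + k) := by
    intro cst P Q hP hQ
    have h1 : (fun q : ℝ × ℝ × ℝ => cst * P q * Q q) = cst • fun q => P q * Q q := by
      funext q; simp [mul_assoc]
    rw [h1]; exact Submodule.smul_mem _ _ (Mono_mul hP hQ)
  set GF : (ℝ × ℝ × ℝ) → ℝ := fun q =>
    (A 0 0 * Gu0 q * Gv0 q + A 0 1 * Gu0 q * Gv1 q + A 0 2 * Gu0 q * Gv2 q) +
    (A 1 0 * Gu1 q * Gv0 q + A 1 1 * Gu1 q * Gv1 q + A 1 2 * Gu1 q * Gv2 q) +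
    (A 2 0 * Gu2 q * Gv0 q + A 2 1 * Gu2 q * Gv1 q + A 2 2 * Gu2 q * Gv2 q) with hGFdef
  have hGFm : GF ∈ Mono (k + k) (k + k) (k + k) := by
    have hfun : GF = ((fun q : ℝ × ℝ × ℝ => A 0 0 * Gu0 q * Gv0 q) +
        (fun q : ℝ × ℝ × ℝ => A 0 1 * Gu0 q * Gv1 q) +
        (fun q : ℝ × ℝ × ℝ => A 0 2 * Gu0 q * Gv2 q)) +
        ((fun q : ℝ × ℝ × ℝ => A 1 0 * Gu1 q * Gv0 q) +
        (fun q : ℝ × ℝ × ℝ => A 1 1 * Gu1 q * Gv1 q) +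
        (fun q : ℝ × ℝ × ℝ => A 1 2 * Gu1 q * Gv2 q)) +
        ((fun q : ℝ × ℝ × ℝ => A 2 0 * Gu2 q * Gv0 q) +
        (fun q : ℝ × ℝ × ℝ => A 2 1 * Gu2 q * Gv1 q) +
        (fun q : ℝ × ℝ × ℝ => A 2 2 * Gu2 q * Gv2 q)) := by
      funext q; simp only [hGFdef, Pi.add_apply]
    rw [hfun]
    exact Submodule.add_mem _ (Submodule.add_mem _
      (Submodule.add_mem _ (Submodule.add_mem _ (hterm _ _ _ hGu0m hGv0m)
        (hterm _ _ _ hGu0m hGv1m)) (hterm _ _ _ hGu0m hGv2m))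
      (Submodule.add_mem _ (Submodule.add_mem _ (hterm _ _ _ hGu1m hGv0m)
        (hterm _ _ _ hGu1m hGv1m)) (hterm _ _ _ hGu1m hGv2m)))
      (Submodule.add_mem _ (Submodule.add_mem _ (hterm _ _ _ hGu2m hGv0m)
        (hterm _ _ _ hGu2m hGv1m)) (hterm _ _ _ hGu2m hGv2m))
  have hrep : ∀ x y z : ℝ, z ≠ 1 →
      F (x * (1 - z), y * (1 - z), z) = GF (x, y, z) := by
    intro x y z hz
    obtain ⟨hu0, hu1, hu2⟩ := hGu x y z hz
    obtain ⟨hv0, hv1, hv2⟩ := hGv x y z hz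
    rw [hF]
    simp only [Fin.sum_univ_three]
    rw [hu0, hu1, hu2, hv0, hv1, hv2]
  have hkk : k + k ≤ 2 * k + 1 := by omega
  have hder : ∀ p ∈ sset, HasFDerivWithinAt psiMap (Lmap p) sset p :=
    fun p _ => (hasFDerivAt_psiMap p).hasFDerivWithinAt
  have hEq : Set.EqOn (fun p => |(Lmap p).det| • F (psiMap p))
      (fun p : ℝ × ℝ × ℝ => (1 - p.2.2) ^ 2 * GF p) sset := by
    intro p hp
    simp only [sset, Set.mem_prod, Set.mem_Icc, Set.mem_Ico] at hp
    have hz : p.2.2 ≠ 1 := ne_of_lt hp.2.2.2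
    have h2 := hrep p.1 p.2.1 p.2.2 hz
    simp only
    rw [Lmap_det, abs_of_nonneg (sq_nonneg _), smul_eq_mul, show F (psiMap p) = GF p from h2]
  have hIs' : IntegrableOn (fun p => |(Lmap p).det| • F (psiMap p)) sset volume :=
    (((Mono_integrableOn hGFm).mono_set sset_subset_cube).congr_fun hEq.symm meas_sset)
  have hIF : IntegrableOn F (psiMap '' sset) volume :=
    (integrableOn_image_iff_integrableOn_abs_det_fderiv_smul volume meas_sset hder
      psi_injOn F).mpr hIs'
  have hIKhat : IntegrableOn F Khat volume := by
    unfold IntegrableOn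
    rw [Measure.restrict_congr_set khat_ae_image]
    exact hIF
  have hint : ∫ p in Khat, F p = ∫ p in cube, (1 - p.2.2) ^ 2 * GF p := by
    rw [setIntegral_congr_set khat_ae_image,
      integral_image_eq_integral_abs_det_fderiv_smul volume meas_sset hder psi_injOn F,
      setIntegral_congr_fun meas_sset hEq]
    exact setIntegral_congr_set sset_ae_cube
  have hquad : quadS xi lam ze mu F = ∫ p in cube, (1 - p.2.2) ^ 2 * GF p := by
    unfold quadS
    have hstep : ∑ i, ∑ j, ∑ l, lam i * lam j * mu l *
        F (xi i * (1 - ze l), xi j * (1 - ze l), ze l)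
        = ∑ i, ∑ j, ∑ l, lam i * lam j * mu l * GF (xi i, xi j, ze l) :=
      Finset.sum_congr rfl fun i _ => Finset.sum_congr rfl fun j _ =>
        Finset.sum_congr rfl fun l _ => by
          rw [hrep _ _ _ (ne_of_lt (hze l).2)]
    rw [hstep]
    exact cube_exact xi lam ze mu hxi hmu hkk hkk hkk hGFm
  exact ⟨hIKhat, by rw [hquad, hint]⟩
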